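/- arXiv:0708.1575 — 2 statements merged into one kernel-verified Lean document; each statement's English description precedes it below -/
import Mathlib

section
/- The zeroth homology of the partial chain complex 0 ← A ←∂₁ A⊗A⊗A with ∂₁(a⊗b⊗c) = abc − cba equals A modulo the two-sided ideal generated by all commutators [a,b] = ab − ba; i.e., HS₀(A) = A/⟨[A,A]⟩, the universal commutative quotient (symmetrization) of A. -/
open TensorProduct

/-- The image of `∂₁ : A⊗A⊗A → A`, `a⊗b⊗c ↦ abc − cba`, is exactly the
two-sided ideal of `A` generated by all commutators `ab − ba`.  Hence
`HS₀(A) = coker ∂₁ = A/⟨[A,A]⟩` is the universal commutative quotient (symmetrization)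
of `A`. -/
theorem HS0_eq_symmetrization (k A : Type*) [CommRing k] [Ring A] [Algebra k A]
    (d1 : A ⊗[k] (A ⊗[k] A) →ₗ[k] A)
    (h1 : ∀ a b c : A, d1 (a ⊗ₜ (b ⊗ₜ c)) = a * b * c - c * b * a) :
    ∀ x : A, x ∈ LinearMap.range d1 ↔
      x ∈ TwoSidedIdeal.span {y : A | ∃ a b : A, y = a * b - b * a} := by
  intro x
  set S : Set A := {y : A | ∃ a b : A, y = a * b - b * a} with hS
  constructor
  · rintro ⟨t, rfl⟩
    -- range ⊆ span of commutators
    induction t using TensorProduct.induction_on with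
    | zero => simpa using (TwoSidedIdeal.span S).zero_mem
    | tmul a u =>
      induction u using TensorProduct.induction_on with
      | zero => simpa using (TwoSidedIdeal.span S).zero_mem
      | tmul b c =>
        rw [h1]
        have key : a * b * c - c * b * a
            = (a * b * c - c * (a * b)) + c * (a * b - b * a) := by noncomm_ring
        rw [key]
        refine (TwoSidedIdeal.span S).add_mem ?_ ?_
        · exact TwoSidedIdeal.subset_span ⟨a * b, c, by noncomm_ring⟩
        · exact (TwoSidedIdeal.span S).mul_mem_left _ _
            (TwoSidedIdeal.subset_span ⟨a, b, rfl⟩)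
      | add u v hu hv =>
        rw [tmul_add, map_add]
        exact (TwoSidedIdeal.span S).add_mem hu hv
    | add u v hu hv =>
      rw [map_add]
      exact (TwoSidedIdeal.span S).add_mem hu hv
  · -- span of commutators ⊆ range
    intro hx
    -- range d1 is closed under left and right multiplication
    have hml : ∀ (z : A) (t : A ⊗[k] (A ⊗[k] A)), z * d1 t ∈ LinearMap.range d1 := by
      intro z t
      induction t using TensorProduct.induction_on with
      | zero => exact ⟨0, by simp⟩
      | tmul a u =>
        induction u using TensorProduct.induction_on with
        | zero => exact ⟨0, by simp⟩
        | tmul b c =>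
          refine ⟨(z * a) ⊗ₜ (b ⊗ₜ c) - (z * c) ⊗ₜ (b ⊗ₜ a) + c ⊗ₜ ((b * z) ⊗ₜ a), ?_⟩
          rw [map_add, map_sub, h1, h1, h1, h1]
          noncomm_ring
        | add u v hu hv =>
          obtain ⟨s, hs⟩ := hu; obtain ⟨r, hr⟩ := hv
          exact ⟨s + r, by rw [map_add, hs, hr, tmul_add, map_add, mul_add]⟩
      | add u v hu hv =>
        obtain ⟨s, hs⟩ := hu; obtain ⟨r, hr⟩ := hv
        exact ⟨s + r, by rw [map_add, hs, hr, map_add, mul_add]⟩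
    have hmr : ∀ (z : A) (t : A ⊗[k] (A ⊗[k] A)), d1 t * z ∈ LinearMap.range d1 := by
      intro z t
      induction t using TensorProduct.induction_on with
      | zero => exact ⟨0, by simp⟩
      | tmul a u =>
        induction u using TensorProduct.induction_on with
        | zero => exact ⟨0, by simp⟩
        | tmul b c =>
          refine ⟨a ⊗ₜ (b ⊗ₜ (c * z)) - c ⊗ₜ (b ⊗ₜ (a * z)) + c ⊗ₜ ((z * b) ⊗ₜ a), ?_⟩
          rw [map_add, map_sub, h1, h1, h1, h1]
          noncomm_ring
        | add u v hu hv =>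
          obtain ⟨s, hs⟩ := hu; obtain ⟨r, hr⟩ := hv
          exact ⟨s + r, by rw [map_add, hs, hr, tmul_add, map_add, add_mul]⟩
      | add u v hu hv =>
        obtain ⟨s, hs⟩ := hu; obtain ⟨r, hr⟩ := hv
        exact ⟨s + r, by rw [map_add, hs, hr, map_add, add_mul]⟩
    -- package the range as a two-sided ideal
    let J : TwoSidedIdeal A := TwoSidedIdeal.mk'
      (LinearMap.range d1 : Set A)
      ⟨0, by simp⟩
      (fun {x y} hx hy => by
        obtain ⟨s, hs⟩ := hx; obtain ⟨r, hr⟩ := hy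
        exact ⟨s + r, by rw [map_add, hs, hr]⟩)
      (fun {x} hx => by
        obtain ⟨s, hs⟩ := hx; exact ⟨-s, by rw [map_neg, hs]⟩)
      (fun {x y} hy => by
        obtain ⟨s, hs⟩ := hy; exact hs ▸ hml x s)
      (fun {x y} hx => by
        obtain ⟨s, hs⟩ := hx; exact hs ▸ hmr y s)
    have hSJ : S ⊆ J := by
      rintro _ ⟨a, b, rfl⟩
      rw [SetLike.mem_coe]
      exact (TwoSidedIdeal.mem_mk' ..).mpr ⟨a ⊗ₜ (b ⊗ₜ 1), by rw [h1]; noncomm_ring⟩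
    have := TwoSidedIdeal.mem_span_iff.mp hx J hSJ
    exact (TwoSidedIdeal.mem_mk' ..).mp this
end

section
/- Every epimorphism f in ΔS from [m] to [n] factors uniquely as a permutation of [m] followed by a surjective order-preserving map, giving a bijection Epi_ΔS([m],[n]) ≅ Σ_{m+1} × Epi_Δ([m],[n]); hence as a right Σ_{m+1}-set (by precomposition with automorphisms of [m]) Epi_ΔS([m],[n]) is free with orbit set Epi_Δ([m],[n]). -/
/-- A morphism `[m] → [n]` in the category `ΔS`: a set function together with a
total (strict linear) order on each fiber, encoded as a relation `lt` that only
relates elements of the same fiber and is a strict linear order on each fiber. -/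
structure DS (m n : ℕ) where
  f : Fin (m+1) → Fin (n+1)
  lt : Fin (m+1) → Fin (m+1) → Prop
  lt_fiber : ∀ {j k}, lt j k → f j = f k
  lt_irrefl : ∀ j, ¬ lt j j
  lt_trans : ∀ {a b c}, lt a b → lt b c → lt a c
  lt_total : ∀ {j k}, f j = f k → j ≠ k → lt j k ∨ lt k j

/-- Composition in `ΔS`, ordering the fibers of `g ∘ f` by blocks. -/
def DS.comp {m n p : ℕ} (g : DS n p) (F : DS m n) : DS m p where
  f := g.f ∘ F.f
  lt j k := (F.f j = F.f k ∧ F.lt j k) ∨ (F.f j ≠ F.f k ∧ g.lt (F.f j) (F.f k))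
  lt_fiber := by
    rintro j k (⟨h, _⟩ | ⟨_, h⟩)
    · simp [Function.comp, h]
    · exact g.lt_fiber h
  lt_irrefl := by
    rintro j (⟨_, h⟩ | ⟨h, _⟩)
    · exact F.lt_irrefl _ h
    · exact h rfl
  lt_trans := by
    rintro a b c (⟨h1, h2⟩ | ⟨h1, h2⟩) (⟨h3, h4⟩ | ⟨h3, h4⟩)
    · exact Or.inl ⟨h1.trans h3, F.lt_trans h2 h4⟩
    · exact Or.inr ⟨fun h => h3 (h1 ▸ h), h1 ▸ h4⟩
    · exact Or.inr ⟨fun h => h1 (h.trans h3.symm), h3 ▸ h2⟩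
    · refine Or.inr ⟨fun h => ?_, g.lt_trans h2 h4⟩
      exact g.lt_irrefl _ (g.lt_trans (h ▸ h2) h4)
  lt_total := by
    intro j k hjk hne
    by_cases h : F.f j = F.f k
    · rcases F.lt_total h hne with h' | h'
      · exact Or.inl (Or.inl ⟨h, h'⟩)
      · exact Or.inr (Or.inl ⟨h.symm, h'⟩)
    · rcases g.lt_total hjk h with h' | h'
      · exact Or.inl (Or.inr ⟨h, h'⟩)
      · exact Or.inr (Or.inr ⟨fun h'' => h h''.symm, h'⟩)

/-- The identity morphism of `[m]` in `ΔS`. -/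
def DS.id (m : ℕ) : DS m m where
  f := _root_.id
  lt _ _ := False
  lt_fiber := by rintro j k ⟨⟩
  lt_irrefl := by rintro j ⟨⟩
  lt_trans := by rintro a b c ⟨⟩
  lt_total := by intro j k h hne; exact absurd h hne

/-- A permutation of `[m]` regarded as a morphism in `ΔS` (singleton fibers). -/
def DS.ofPerm {m : ℕ} (σ : Equiv.Perm (Fin (m+1))) : DS m m where
  f := σ
  lt _ _ := False
  lt_fiber := by rintro j k ⟨⟩
  lt_irrefl := by rintro j ⟨⟩
  lt_trans := by rintro a b c ⟨⟩
  lt_total := by intro j k h hne; exact absurd (σ.injective h) hne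

/-- A set function regarded as a morphism in `ΔS`, with each fiber carrying the
natural order inherited from `[m]`.  Morphisms of `Δ` are `DS.ofFun φ` for `φ`
monotone. -/
def DS.ofFun {m n : ℕ} (φ : Fin (m+1) → Fin (n+1)) : DS m n where
  f := φ
  lt j k := φ j = φ k ∧ j < k
  lt_fiber h := h.1
  lt_irrefl := by rintro j ⟨_, h⟩; exact _root_.lt_irrefl _ h
  lt_trans := by rintro a b c ⟨h1, h2⟩ ⟨h3, h4⟩; exact ⟨h1.trans h3, h2.trans h4⟩
  lt_total := by
    intro j k h hne
    rcases lt_trichotomy j k with h' | h' | h'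
    · exact Or.inl ⟨h, h'⟩
    · exact absurd h' hne
    · exact Or.inr ⟨h.symm, h'⟩


section Aux

variable {m n : ℕ}

/-- A copy of `Fin (m+1)` to carry the refinement order of `F`. -/
def RCopy (m n : ℕ) (_F : DS m n) : Type := Fin (m+1)

/-- The refinement strict total order on `[m]` attached to `F`. -/
def DS.r (F : DS m n) (a b : Fin (m+1)) : Prop :=
  F.f a < F.f b ∨ (F.f a = F.f b ∧ F.lt a b)

/-- Characterization of a factorization `F = (ofFun φ).comp (ofPerm σ)`. -/
def dsFact (F : DS m n) (σ : Equiv.Perm (Fin (m+1))) (φ : Fin (m+1) → Fin (n+1)) : Prop :=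
  F.f = φ ∘ σ ∧ ∀ j k, F.lt j k ↔ (F.f j = F.f k ∧ σ j < σ k)

lemma DS.ext' {F G : DS m n} (hf : F.f = G.f) (hl : F.lt = G.lt) : F = G := by
  cases F; cases G; cases hf; cases hl; rfl

lemma dsFact_comp (σ : Equiv.Perm (Fin (m+1))) (φ : Fin (m+1) → Fin (n+1)) :
    dsFact (DS.comp (DS.ofFun φ) (DS.ofPerm σ)) σ φ := by
  constructor
  · rfl
  · intro j k
    show ((σ : Fin (m+1) → Fin (m+1)) j = σ k ∧ False) ∨
        (σ j ≠ σ k ∧ (φ (σ j) = φ (σ k) ∧ σ j < σ k)) ↔ _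
    constructor
    · rintro (⟨_, h⟩ | ⟨_, h1, h2⟩)
      · exact h.elim
      · exact ⟨h1, h2⟩
    · rintro ⟨h1, h2⟩
      exact Or.inr ⟨ne_of_lt h2, h1, h2⟩

lemma dsFact_eq {F : DS m n} {σ φ} (h : dsFact F σ φ) :
    F = DS.comp (DS.ofFun φ) (DS.ofPerm σ) := by
  refine DS.ext' h.1 ?_
  funext j k
  have h2 := (dsFact_comp σ φ).2 j k
  rw [show (DS.comp (DS.ofFun φ) (DS.ofPerm σ)).f = F.f from h.1.symm] at h2
  exact propext ((h.2 j k).trans h2.symm)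

/-- Existence of the sorting permutation. -/
lemma DS.exists_perm (F : DS m n) :
    ∃ σ : Equiv.Perm (Fin (m+1)), ∀ a b, F.r a b ↔ σ a < σ b := by
  have hirr : ∀ a, ¬ F.r a a := by
    rintro a (h | ⟨_, h⟩)
    · exact _root_.lt_irrefl _ h
    · exact F.lt_irrefl _ h
  have htr : ∀ {a b c}, F.r a b → F.r b c → F.r a c := by
    rintro a b c (h1 | ⟨h1, h1'⟩) (h2 | ⟨h2, h2'⟩)
    · exact Or.inl (h1.trans h2)
    · exact Or.inl (h2 ▸ h1)
    · exact Or.inl (h1 ▸ h2)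
    · exact Or.inr ⟨h1.trans h2, F.lt_trans h1' h2'⟩
  have htot : ∀ a b, F.r a b ∨ a = b ∨ F.r b a := by
    intro a b
    by_cases hab : a = b
    · exact Or.inr (Or.inl hab)
    rcases lt_trichotomy (F.f a) (F.f b) with h | h | h
    · exact Or.inl (Or.inl h)
    · rcases F.lt_total h hab with h' | h'
      · exact Or.inl (Or.inr ⟨h, h'⟩)
      · exact Or.inr (Or.inr (Or.inr ⟨h.symm, h'⟩))
    · exact Or.inr (Or.inr (Or.inl h))
  letI : Fintype (RCopy m n F) := inferInstanceAs (Fintype (Fin (m+1)))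
  haveI : IsStrictTotalOrder (RCopy m n F) F.r :=
    { irrefl := hirr
      trans := fun _ _ _ => htr
      trichotomous := fun a b h1 h2 => by
        rcases htot a b with h | h | h
        exacts [absurd h h1, h, absurd h h2] }
  letI : @DecidableRel (RCopy m n F) (RCopy m n F) F.r := Classical.decRel _
  letI L : LinearOrder (RCopy m n F) := linearOrderOfSTO F.r
  have hcard : Fintype.card (RCopy m n F) = m + 1 := Fintype.card_fin _
  let iso : Fin (m+1) ≃o RCopy m n F := monoEquivOfFin (RCopy m n F) hcard
  refine ⟨(iso.toEquiv.symm : RCopy m n F ≃ Fin (m+1)), fun a b => ?_⟩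
  exact (iso.symm.lt_iff_lt (x := (a : RCopy m n F)) (y := (b : RCopy m n F))).symm

lemma dsFact_exists (F : DS m n) :
    ∃ σ φ, Monotone φ ∧ dsFact F σ φ := by
  obtain ⟨σ, hσ⟩ := F.exists_perm
  refine ⟨σ, F.f ∘ σ.symm, ?_, ?_, ?_⟩
  · intro a b hab
    rcases eq_or_lt_of_le hab with h | h
    · exact le_of_eq (by rw [h])
    · have hr : F.r (σ.symm a) (σ.symm b) := (hσ _ _).2 (by simpa using h)
      rcases hr with h' | ⟨h', _⟩
      · exact le_of_lt h'
      · exact le_of_eq h'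
  · funext a; simp
  · intro j k
    constructor
    · intro h
      have hfib := F.lt_fiber h
      have : F.r j k := Or.inr ⟨hfib, h⟩
      exact ⟨hfib, (hσ _ _).1 this⟩
    · rintro ⟨h1, h2⟩
      rcases (hσ j k).2 h2 with h' | ⟨_, h'⟩
      · exact absurd h1 (ne_of_lt h')
      · exact h'

lemma dsFact_r {F : DS m n} {σ φ} (h : dsFact F σ φ) (hm : Monotone φ) :
    ∀ a b, F.r a b ↔ σ a < σ b := by
  have hf : ∀ a, F.f a = φ (σ a) := fun a => congrFun h.1 a
  intro a b
  constructor
  · rintro (h' | ⟨h', h''⟩)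
    · by_contra hc
      push_neg at hc
      have := hm hc
      rw [← hf a, ← hf b] at this
      exact absurd h' (not_lt_of_ge this)
    · exact ((h.2 a b).1 h'').2
  · intro h'
    have hle : F.f a ≤ F.f b := by
      rw [hf a, hf b]; exact hm (le_of_lt h')
    rcases eq_or_lt_of_le hle with he | hlt
    · refine Or.inr ⟨he, ?_⟩
      have hab : a ≠ b := fun hh => absurd (hh ▸ h') (_root_.lt_irrefl _)
      rcases F.lt_total he hab with hl | hl
      · exact hl
      · have := ((h.2 b a).1 hl).2
        exact absurd h' (not_lt_of_gt this)
    · exact Or.inl hlt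

lemma dsFact_unique {F : DS m n} {σ σ' φ φ'} (h : dsFact F σ φ) (h' : dsFact F σ' φ')
    (hm : Monotone φ) (hm' : Monotone φ') : σ = σ' ∧ φ = φ' := by
  have hr := dsFact_r h hm
  have hr' := dsFact_r h' hm'
  have key : ∀ a b, σ a < σ b ↔ σ' a < σ' b := fun a b => (hr a b).symm.trans (hr' a b)
  have hsm : StrictMono (fun x => σ' (σ.symm x)) := by
    intro a b hab
    have : σ (σ.symm a) < σ (σ.symm b) := by simpa using hab
    exact (key _ _).1 this
  have heq : (fun x => σ' (σ.symm x)) = (_root_.id : Fin (m+1) → Fin (m+1)) := by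
    have hid : StrictMono (_root_.id : Fin (m+1) → Fin (m+1)) := fun _ _ h => h
    haveI : WellFoundedLT (Fin (m+1)) := inferInstance
    have hri := StrictMono.range_inj (β := Fin (m+1)) (γ := Fin (m+1)) hsm hid
    refine hri.1 ?_
    rw [Set.range_id]
    exact Set.range_eq_univ.2 fun y => ⟨σ (σ'.symm y), by simp⟩
  have hσ : σ = σ' := by
    refine Equiv.ext fun x => ?_
    have := congrFun heq (σ x)
    simpa using this.symm
  refine ⟨hσ, ?_⟩
  funext x
  have := congrFun h.1 (σ.symm x)
  have h2 := congrFun h'.1 (σ.symm x)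
  rw [this] at h2
  simpa [hσ] using h2

lemma dsFact_comp_perm {F : DS m n} {σ φ} (h : dsFact F σ φ) (τ : Equiv.Perm (Fin (m+1))) :
    dsFact (DS.comp F (DS.ofPerm τ)) (σ * τ) φ := by
  constructor
  · funext a
    show F.f (τ a) = φ (σ (τ a))
    exact congrFun h.1 (τ a)
  · intro j k
    show ((τ : Fin (m+1) → Fin (m+1)) j = τ k ∧ False) ∨ (τ j ≠ τ k ∧ F.lt (τ j) (τ k)) ↔
      (F.f (τ j) = F.f (τ k) ∧ σ (τ j) < σ (τ k))
    constructor
    · rintro (⟨_, h'⟩ | ⟨_, h'⟩)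
      · exact h'.elim
      · exact (h.2 (τ j) (τ k)).1 h'
    · rintro ⟨h1, h2⟩
      have hl := (h.2 (τ j) (τ k)).2 ⟨h1, h2⟩
      refine Or.inr ⟨fun he => ?_, hl⟩
      rw [he] at hl
      exact F.lt_irrefl _ hl

end Aux

/-- Every epimorphism `[m] ↠ [n]` in `ΔS` factors uniquely as a
permutation of `[m]` followed by a surjective order-preserving map, giving a bijection
`Epi_ΔS([m],[n]) ≅ Σ_{m+1} × Epi_Δ([m],[n])`; moreover this bijection is equivariant
for the right `Σ_{m+1}`-action by precomposition, so that `Epi_ΔS([m],[n])` is a free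
right `Σ_{m+1}`-set with orbit set `Epi_Δ([m],[n])`. -/
theorem deltaS_epi_decomposition (m n : ℕ) :
    ∃ e : {F : DS m n // Function.Surjective F.f} ≃
        (Equiv.Perm (Fin (m+1)) ×
          {φ : Fin (m+1) → Fin (n+1) // Monotone φ ∧ Function.Surjective φ}),
      (∀ F : {F : DS m n // Function.Surjective F.f},
        F.1 = DS.comp (DS.ofFun (e F).2.1) (DS.ofPerm (e F).1)) ∧
      (∀ (F : {F : DS m n // Function.Surjective F.f}) (σ : Equiv.Perm (Fin (m+1)))
        (h : Function.Surjective (DS.comp F.1 (DS.ofPerm σ)).f),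
        e ⟨DS.comp F.1 (DS.ofPerm σ), h⟩ = ((e F).1 * σ, (e F).2)) := by
  classical
  -- package existence with surjectivity
  have exi : ∀ F : {F : DS m n // Function.Surjective F.f},
      ∃ p : Equiv.Perm (Fin (m+1)) ×
          {φ : Fin (m+1) → Fin (n+1) // Monotone φ ∧ Function.Surjective φ},
        dsFact F.1 p.1 p.2.1 := by
    rintro ⟨F, hs⟩
    obtain ⟨σ, φ, hm, hfact⟩ := dsFact_exists F
    refine ⟨(σ, ⟨φ, hm, ?_⟩), hfact⟩
    intro y
    obtain ⟨x, hx⟩ := hs y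
    exact ⟨σ x, by rw [← hx, hfact.1]; rfl⟩
  choose dec hdec using exi
  have hsurj : ∀ p : Equiv.Perm (Fin (m+1)) ×
      {φ : Fin (m+1) → Fin (n+1) // Monotone φ ∧ Function.Surjective φ},
      Function.Surjective (DS.comp (DS.ofFun p.2.1) (DS.ofPerm p.1)).f := by
    intro p y
    obtain ⟨x, hx⟩ := p.2.2.2 y
    refine ⟨p.1.symm x, ?_⟩
    show p.2.1 (p.1 (p.1.symm x)) = y
    simpa using hx
  -- uniqueness: dec is determined by dsFact
  have huniq : ∀ (F : {F : DS m n // Function.Surjective F.f}) (σ : Equiv.Perm (Fin (m+1)))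
      (φ : {φ : Fin (m+1) → Fin (n+1) // Monotone φ ∧ Function.Surjective φ}),
      dsFact F.1 σ φ.1 → dec F = (σ, φ) := by
    intro F σ φ hf
    obtain ⟨h1, h2⟩ := dsFact_unique (hdec F) hf (dec F).2.2.1 φ.2.1
    exact Prod.ext h1 (Subtype.ext h2)
  refine ⟨{ toFun := dec
            invFun := fun p => ⟨DS.comp (DS.ofFun p.2.1) (DS.ofPerm p.1), hsurj p⟩
            left_inv := ?_
            right_inv := ?_ }, ?_, ?_⟩
  · intro F
    exact Subtype.ext (dsFact_eq (hdec F)).symm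
  · intro p
    exact huniq _ p.1 p.2 (dsFact_comp p.1 p.2.1)
  · intro F
    have := dsFact_eq (hdec F)
    simpa using this
  · intro F σ h
    exact huniq ⟨DS.comp F.1 (DS.ofPerm σ), h⟩ ((dec F).1 * σ) (dec F).2
      (dsFact_comp_perm (hdec F) σ)
end
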